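/- Let G : ℝ → ℝ be G(x) = exp(−|x|)/2 and let k ∈ ℝ. Suppose u : ℝ × ℝ → ℝ has continuous first-order partial derivatives, u(·,t) and ∂ₓu(·,t) are integrable on ℝ for every t, and u satisfies ∂ₜu(x,t) + u(x,t)∂ₓu(x,t) + (G * ∂ₓu(·,t))(x) = 0 for all (x,t). Then the function v defined by v(x,t) = u(x − kt, t) + k has continuous first-order partial derivatives, v(·,t) − k and ∂ₓv(·,t) are integrable, and v satisfies ∂ₜv(x,t) + v(x,t)∂ₓv(x,t) + (G * ∂ₓv(·,t))(x) = 0 for all (x,t). -/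

import Mathlib

open MeasureTheory Real

/-- Galilean-type symmetry of the nonlocal Fornberg–Whitham equation
`u_t + u u_x + G * u_x = 0` with kernel `G(x) = exp(−|x|)/2`: if `u` is a `C¹`
solution with `u(·,t)` and `∂ₓu(·,t)` integrable, then
`v(x,t) = u(x − kt, t) + k` is again a `C¹` solution with `v(·,t) − k` and
`∂ₓv(·,t)` integrable. -/
theorem stmt6 (k : ℝ) (u : ℝ × ℝ → ℝ)
    (hu : ContDiff ℝ 1 u)
    (hint : ∀ t, Integrable (fun x => u (x, t)))
    (hint' : ∀ t, Integrable (fun x => deriv (fun y => u (y, t)) x))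
    (heq : ∀ x t, deriv (fun s => u (x, s)) t
        + u (x, t) * deriv (fun y => u (y, t)) x
        + (∫ s, (exp (-|x - s|) / 2) * deriv (fun y => u (y, t)) s) = 0) :
    ContDiff ℝ 1 (fun p : ℝ × ℝ => u (p.1 - k * p.2, p.2) + k) ∧
    (∀ t, Integrable (fun x => (u (x - k * t, t) + k) - k)) ∧
    (∀ t, Integrable (fun x => deriv (fun y => u (y - k * t, t) + k) x)) ∧
    (∀ x t, deriv (fun s => u (x - k * s, s) + k) t
        + (u (x - k * t, t) + k) * deriv (fun y => u (y - k * t, t) + k) x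
        + (∫ s, (exp (-|x - s|) / 2) * deriv (fun y => u (y - k * t, t) + k) s) = 0) := by
  have hd : Differentiable ℝ u := hu.differentiable one_ne_zero
  -- spatial derivative of v
  have hA : ∀ x t, deriv (fun y => u (y - k * t, t) + k) x
      = deriv (fun y => u (y, t)) (x - k * t) := by
    intro x t
    rw [deriv_add_const]
    exact deriv_comp_sub_const (fun y => u (y, t)) (k * t) x
  -- spatial partial derivative as fderiv
  have hx : ∀ x t, HasDerivAt (fun y => u (y, t)) (fderiv ℝ u (x, t) (1, 0)) x := by
    intro x t
    exact (hd (x, t)).hasFDerivAt.comp_hasDerivAt x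
      ((hasDerivAt_id x).prodMk (hasDerivAt_const x t))
  have ht : ∀ x t, HasDerivAt (fun s => u (x, s)) (fderiv ℝ u (x, t) (0, 1)) t := by
    intro x t
    exact (hd (x, t)).hasFDerivAt.comp_hasDerivAt t
      ((hasDerivAt_const t x).prodMk (hasDerivAt_id t))
  -- time derivative of v
  have hB : ∀ x t, deriv (fun s => u (x - k * s, s) + k) t
      = -k * deriv (fun y => u (y, t)) (x - k * t)
        + deriv (fun s => u (x - k * t, s)) t := by
    intro x t
    have hline : HasDerivAt (fun s : ℝ => (x - k * s, s)) ((-k, 1) : ℝ × ℝ) t := by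
      simpa using (((hasDerivAt_const t x).sub ((hasDerivAt_id t).const_mul k)).prodMk
        (hasDerivAt_id t))
    have h0 : HasDerivAt (fun s => u (x - k * s, s))
        (fderiv ℝ u (x - k * t, t) (-k, 1)) t :=
      HasFDerivAt.comp_hasDerivAt (f := fun s : ℝ => (x - k * s, s)) t
        (hd (x - k * t, t)).hasFDerivAt hline
    have h1 := h0.add_const k
    rw [h1.deriv]
    have hv : ((-k, 1) : ℝ × ℝ) = (-k) • ((1, 0) : ℝ × ℝ) + (0, 1) := by
      simp [Prod.ext_iff]
    rw [hv, ContinuousLinearMap.map_add, ContinuousLinearMap.map_smul, smul_eq_mul,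
      (hx (x - k * t) t).deriv, (ht (x - k * t) t).deriv]
  refine ⟨?_, ?_, ?_, ?_⟩
  · exact (hu.comp ((contDiff_fst.sub (contDiff_const.mul contDiff_snd)).prodMk
      contDiff_snd)).add contDiff_const
  · intro t
    simpa using (hint t).comp_sub_right (k * t)
  · intro t
    have := (hint' t).comp_sub_right (k * t)
    exact this.congr (Filter.Eventually.of_forall fun x => (hA x t).symm)
  · intro x t
    have hconv : (∫ s, (exp (-|x - s|) / 2) * deriv (fun y => u (y - k * t, t) + k) s)
        = ∫ s, (exp (-|(x - k * t) - s|) / 2) * deriv (fun y => u (y, t)) s := by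
      rw [← integral_sub_right_eq_self
        (fun w => (exp (-|(x - k * t) - w|) / 2) * deriv (fun y => u (y, t)) w) (k * t)]
      congr 1
      funext s
      rw [hA s t]
      have h2 : x - k * t - (s - k * t) = x - s := by ring
      simp only [h2]
    rw [hconv, hB, hA]
    linear_combination heq (x - k * t) t
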